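/- (Proposition: LFI 2.) Let λ ≠ 0 and let L_a(q) be a smooth generalized Killing vector of Γ satisfying (L_b Q^b)_{,a} = −λ² L_a. Then I = (e^{λt}/λ)(λ L_a q̇^a + L_a Q^a) is a first integral of q̈^a = −Γ^a_{bc}q̇^bq̇^c − Q^a. -/

import Mathlib

noncomputable section
open scoped BigOperators

/-- Points of the configuration space `ℝ^D`. -/
abbrev Vec (D : ℕ) := Fin D → ℝ

/-- Connection coefficients: `Γ q a b c = Γ^a_{bc}(q)`. -/
abbrev Conn (D : ℕ) := Vec D → Fin D → Fin D → Fin D → ℝ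

/-- Partial derivative `∂f/∂q^j`. -/
def pd {D : ℕ} (j : Fin D) (f : Vec D → ℝ) (q : Vec D) : ℝ :=
  fderiv ℝ f q (Pi.single j 1)

/-- Covariant derivative of a covector field:
`L_{a|b} = ∂L_a/∂q^b − Γ^s_{ab} L_s`. -/
def covD1 {D : ℕ} (Γ : Conn D) (L : Vec D → Fin D → ℝ) (q : Vec D) (a b : Fin D) : ℝ :=
  pd b (fun p => L p a) q - ∑ s, Γ q s a b * L q s

/-- Generalized Killing vector: `L_{(a|b)} = 0`. -/
def IsGenKV {D : ℕ} (Γ : Conn D) (L : Vec D → Fin D → ℝ) : Prop :=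
  ∀ q a b, covD1 Γ L q a b + covD1 Γ L q b a = 0

/-- `q, v` solve `q̈^a = -Γ^a_{bc}(q) q̇^b q̇^c - Q^a(q)` on the set `s ⊆ ℝ`. -/
def IsSolutionOn {D : ℕ} (Γ : Conn D) (Q : Vec D → Fin D → ℝ)
    (s : Set ℝ) (q v : ℝ → Vec D) : Prop :=
  ∀ t ∈ s, ∀ a : Fin D,
    HasDerivAt (fun τ => q τ a) (v t a) t ∧
    HasDerivAt (fun τ => v τ a)
      (-(∑ b, ∑ c, Γ (q t) a b c * v t b * v t c) - Q (q t) a) t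

/-- `I(t,q,q̇)` is a first integral of the system: it is constant along every
(C²) solution defined on an open interval. -/
def FirstIntegral {D : ℕ} (Γ : Conn D) (Q : Vec D → Fin D → ℝ)
    (I : ℝ → Vec D → Vec D → ℝ) : Prop :=
  ∀ (a b : ℝ) (q v : ℝ → Vec D), IsSolutionOn Γ Q (Set.Ioo a b) q v →
    ∀ t₁ ∈ Set.Ioo a b, ∀ t₂ ∈ Set.Ioo a b,
      I t₁ (q t₁) (v t₁) = I t₂ (q t₂) (v t₂)

lemma clm_apply_sum {D : ℕ} (φ : Vec D →L[ℝ] ℝ) (w : Vec D) :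
    φ w = ∑ b, w b * φ (Pi.single b 1) := by
  conv_lhs => rw [← Finset.univ_sum_single w]
  rw [map_sum]
  refine Finset.sum_congr rfl fun b _ => ?_
  have : Pi.single b (w b) = w b • (Pi.single b 1 : Vec D) := by
    simp [← Pi.single_smul]
  rw [this, map_smul, smul_eq_mul]

lemma hasDerivAt_comp_pd {D : ℕ} {f : Vec D → ℝ} (hf : ContDiff ℝ (⊤ : ℕ∞) f)
    {q : ℝ → Vec D} {vt : Vec D} {t : ℝ} (hq : HasDerivAt q vt t) :
    HasDerivAt (fun τ => f (q τ)) (∑ b, vt b * pd b f (q t)) t := by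
  have h1 : HasFDerivAt f (fderiv ℝ f (q t)) (q t) :=
    (hf.differentiable (by norm_num)).differentiableAt.hasFDerivAt
  have h2 := h1.comp_hasDerivAt t hq
  rw [clm_apply_sum (fderiv ℝ f (q t)) vt] at h2
  exact h2

/-- Proposition: LFI 2. -/
theorem stmt4 {D : ℕ} (lam : ℝ) (hlam : lam ≠ 0)
    (Γ : Conn D) (Q : Vec D → Fin D → ℝ)
    (hΓsym : ∀ q a b c, Γ q a b c = Γ q a c b)
    (hΓ : ∀ a b c, ContDiff ℝ (⊤ : ℕ∞) fun q => Γ q a b c)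
    (hQ : ∀ a, ContDiff ℝ (⊤ : ℕ∞) fun q => Q q a)
    (L : Vec D → Fin D → ℝ)
    (hLsm : ∀ a, ContDiff ℝ (⊤ : ℕ∞) fun q => L q a)
    (hKV : IsGenKV Γ L)
    -- `(L_b Q^b)_{,a} = −λ² L_a`
    (hc : ∀ q (a : Fin D),
      pd a (fun p => ∑ b, L p b * Q p b) q = -lam ^ 2 * L q a) :
    FirstIntegral Γ Q (fun t q v =>
      Real.exp (lam * t) / lam * (lam * ∑ a, L q a * v a + ∑ a, L q a * Q q a)) := by
  intro a b q v hsol t₁ ht₁ t₂ ht₂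
  set F : ℝ → ℝ := fun τ =>
    Real.exp (lam * τ) / lam *
      (lam * ∑ a', L (q τ) a' * v τ a' + ∑ a', L (q τ) a' * Q (q τ) a') with hFdef
  show F t₁ = F t₂
  have hder : ∀ t ∈ Set.Ioo a b, HasDerivAt F 0 t := by
    intro t ht
    have hq : HasDerivAt q (v t) t := hasDerivAt_pi.2 fun i => (hsol t ht i).1
    set x := q t with hx
    set w := v t with hw
    have hLa : ∀ a', HasDerivAt (fun τ => L (q τ) a')
        (∑ b', w b' * pd b' (fun p => L p a') x) t :=
      fun a' => hasDerivAt_comp_pd (hLsm a') hq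
    have hgQ : ContDiff ℝ (⊤ : ℕ∞) (fun p => ∑ b', L p b' * Q p b') :=
      ContDiff.sum fun b' _ => (hLsm b').mul (hQ b')
    have hsum2 : HasDerivAt (fun τ => ∑ a', L (q τ) a' * Q (q τ) a')
        (∑ b', w b' * (-lam ^ 2 * L x b')) t := by
      have h := hasDerivAt_comp_pd hgQ hq
      simpa [hc] using h
    have hsum1 : HasDerivAt (fun τ => ∑ a', L (q τ) a' * v τ a')
        (∑ a', ((∑ b', w b' * pd b' (fun p => L p a') x) * w a' +
          L x a' * (-(∑ b', ∑ c', Γ x a' b' c' * w b' * w c') - Q x a'))) t :=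
      HasDerivAt.fun_sum fun a' _ => (hLa a').mul (hsol t ht a').2
    have hexp : HasDerivAt (fun τ => Real.exp (lam * τ) / lam) (Real.exp (lam * t)) t := by
      have h1 : HasDerivAt (fun τ : ℝ => lam * τ) lam t := by
        simpa using (hasDerivAt_id t).const_mul lam
      have h3 := h1.exp.div_const lam
      exact h3.congr_deriv (by field_simp)
    have hF := hexp.mul ((hsum1.const_mul lam).add hsum2)
    refine (hF.congr_deriv ?_ : HasDerivAt F 0 t)
    simp only [Pi.add_apply, ← hx, ← hw]
    -- algebraic identity: the derivative vanishes
    have kv : ∀ a' b', pd b' (fun p => L p a') x + pd a' (fun p => L p b') x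
        = 2 * ∑ s, Γ x s a' b' * L x s := by
      intro a' b'
      have h := hKV x a' b'
      simp only [covD1] at h
      have hsym : ∑ s, Γ x s b' a' * L x s = ∑ s, Γ x s a' b' * L x s :=
        Finset.sum_congr rfl fun s _ => by rw [hΓsym]
      rw [hsym] at h
      linarith
    have key : ∑ a', (∑ b', w b' * pd b' (fun p => L p a') x) * w a'
        = ∑ a', L x a' * (∑ b', ∑ c', Γ x a' b' c' * w b' * w c') := by
      have l1 : ∑ a', (∑ b', w b' * pd b' (fun p => L p a') x) * w a'
          = ∑ a', ∑ b', pd b' (fun p => L p a') x * w a' * w b' := by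
        refine Finset.sum_congr rfl fun a' _ => ?_
        rw [Finset.sum_mul]
        exact Finset.sum_congr rfl fun b' _ => by ring
      have l2 : ∑ a', ∑ b', pd b' (fun p => L p a') x * w a' * w b'
          = ∑ a', ∑ b', pd a' (fun p => L p b') x * w a' * w b' := by
        rw [Finset.sum_comm]
        exact Finset.sum_congr rfl fun a' _ => Finset.sum_congr rfl fun b' _ => by ring
      have l3 : ∑ a', ∑ b', pd b' (fun p => L p a') x * w a' * w b'
          = ∑ a', ∑ b', (∑ s, Γ x s a' b' * L x s) * w a' * w b' := by
        have h2 : (2 : ℝ) * (∑ a', ∑ b', pd b' (fun p => L p a') x * w a' * w b')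
            = 2 * (∑ a', ∑ b', (∑ s, Γ x s a' b' * L x s) * w a' * w b') := by
          calc (2 : ℝ) * (∑ a', ∑ b', pd b' (fun p => L p a') x * w a' * w b')
              = ∑ a', ∑ b', (pd b' (fun p => L p a') x + pd a' (fun p => L p b') x)
                  * w a' * w b' := by
                rw [two_mul]
                nth_rewrite 2 [l2]
                rw [← Finset.sum_add_distrib]
                refine Finset.sum_congr rfl fun a' _ => ?_
                rw [← Finset.sum_add_distrib]
                exact Finset.sum_congr rfl fun b' _ => by ring
            _ = 2 * ∑ a', ∑ b', (∑ s, Γ x s a' b' * L x s) * w a' * w b' := by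
                rw [Finset.mul_sum]
                refine Finset.sum_congr rfl fun a' _ => ?_
                rw [Finset.mul_sum]
                refine Finset.sum_congr rfl fun b' _ => ?_
                rw [kv a' b']
                ring
        linarith
      rw [l1, l3]
      -- reindex triple sum
      have r1 : ∀ a', ∑ b', (∑ s, Γ x s a' b' * L x s) * w a' * w b'
          = ∑ b', ∑ s, Γ x s a' b' * L x s * w a' * w b' := by
        intro a'
        refine Finset.sum_congr rfl fun b' _ => ?_
        rw [Finset.sum_mul, Finset.sum_mul]
      simp only [r1]
      have r2 : ∑ a', ∑ b', ∑ s, Γ x s a' b' * L x s * w a' * w b'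
          = ∑ s, ∑ a', ∑ b', Γ x s a' b' * L x s * w a' * w b' := by
        calc ∑ a', ∑ b', ∑ s, Γ x s a' b' * L x s * w a' * w b'
            = ∑ a', ∑ s, ∑ b', Γ x s a' b' * L x s * w a' * w b' :=
              Finset.sum_congr rfl fun a' _ => Finset.sum_comm
          _ = ∑ s, ∑ a', ∑ b', Γ x s a' b' * L x s * w a' * w b' :=
              Finset.sum_comm
      rw [r2]
      refine Finset.sum_congr rfl fun s _ => ?_
      rw [Finset.mul_sum]
      refine Finset.sum_congr rfl fun a' _ => ?_
      rw [Finset.mul_sum]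
      exact Finset.sum_congr rfl fun b' _ => by ring
    -- now finish the scalar computation
    have e1 : ∑ a', ((∑ b', w b' * pd b' (fun p => L p a') x) * w a' +
          L x a' * (-(∑ b', ∑ c', Γ x a' b' c' * w b' * w c') - Q x a'))
        = - ∑ a', L x a' * Q x a' := by
      rw [Finset.sum_add_distrib, key]
      have : ∑ a', L x a' * (-(∑ b', ∑ c', Γ x a' b' c' * w b' * w c') - Q x a')
          = -(∑ a', L x a' * (∑ b', ∑ c', Γ x a' b' c' * w b' * w c'))
            - ∑ a', L x a' * Q x a' := by
        rw [← Finset.sum_neg_distrib, ← Finset.sum_sub_distrib]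
        exact Finset.sum_congr rfl fun a' _ => by ring
      rw [this]
      ring
    have e2 : ∑ b', w b' * (-lam ^ 2 * L x b') = -lam ^ 2 * ∑ a', L x a' * w a' := by
      rw [Finset.mul_sum]
      exact Finset.sum_congr rfl fun b' _ => by ring
    rw [e1, e2]
    field_simp
    ring
  -- constancy on the open interval
  have hfd : ∀ t ∈ Set.Ioo a b, HasFDerivAt F (0 : ℝ →L[ℝ] ℝ) t := by
    intro t ht
    have h0 : (ContinuousLinearMap.smulRight (1 : ℝ →L[ℝ] ℝ) (0 : ℝ)) = 0 := by
      ext z : 1; simp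
    rw [← h0]
    exact (hder t ht).hasFDerivAt
  exact (convex_Ioo a b).is_const_of_fderivWithin_eq_zero
    (fun t ht => (hfd t ht).differentiableAt.differentiableWithinAt)
    (fun t ht => by
      rw [fderivWithin_of_isOpen isOpen_Ioo ht]
      exact (hfd t ht).fderiv) ht₁ ht₂
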